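/- Let g ≥ 1 and let A, B ∈ Sp(2g,ℝ). Then the restriction of the bilinear form ⟨·,·⟩_{A,B} to the subspace V_{A,B} is symmetric; that is, for all (x₁,y₁), (x₂,y₂) ∈ V_{A,B} one has (x₁+y₁) · J(I−B)y₂ = (x₂+y₂) · J(I−B)y₁. -/

import Mathlib

open Matrix

noncomputable section

/-- Index type for `ℝ^{2g}` written in `g × g` block form. -/
abbrev SpIdx (g : ℕ) := Fin g ⊕ Fin g

/-- Real `2g × 2g` matrices. -/
abbrev SpMat (g : ℕ) := Matrix (SpIdx g) (SpIdx g) ℝ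

/-- Vectors in `ℝ^{2g}`. -/
abbrev SpVec (g : ℕ) := SpIdx g → ℝ

/-- The standard symplectic matrix `J = [[0, -I],[I, 0]]`. -/
def symJ (g : ℕ) : SpMat g := Matrix.fromBlocks 0 (-1) 1 0

/-- `M` belongs to `Sp(2g, ℝ)`: `Mᵀ J M = J`. -/
def IsSymplectic {g : ℕ} (M : SpMat g) : Prop := Mᵀ * symJ g * M = symJ g

/-- The subspace `V_{A,B} = {(x,y) : (A⁻¹ - I)x + (B - I)y = 0}`. -/
def VAB {g : ℕ} (A B : SpMat g) : Set (SpVec g × SpVec g) :=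
  { z | (A⁻¹ *ᵥ z.1 - z.1) + (B *ᵥ z.2 - z.2) = 0 }

/-- Meyer's bilinear form `⟨(x₁,y₁),(x₂,y₂)⟩_{A,B} = (x₁ + y₁) · J (I - B) y₂`. -/
def meyerForm {g : ℕ} (A B : SpMat g) (z₁ z₂ : SpVec g × SpVec g) : ℝ :=
  (z₁.1 + z₁.2) ⬝ᵥ (symJ g *ᵥ (z₂.2 - B *ᵥ z₂.2))

/-- Maximal dimension of a subspace of `V_{A,B}` on which Meyer's form is positive definite. -/
def meyerPosIndex {g : ℕ} (A B : SpMat g) : ℕ :=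
  sSup { n | ∃ W : Submodule ℝ (SpVec g × SpVec g),
    (W : Set (SpVec g × SpVec g)) ⊆ VAB A B ∧
    (∀ z ∈ W, z ≠ 0 → 0 < meyerForm A B z z) ∧ Module.finrank ℝ W = n }

/-- Maximal dimension of a subspace of `V_{A,B}` on which Meyer's form is negative definite. -/
def meyerNegIndex {g : ℕ} (A B : SpMat g) : ℕ :=
  sSup { n | ∃ W : Submodule ℝ (SpVec g × SpVec g),
    (W : Set (SpVec g × SpVec g)) ⊆ VAB A B ∧
    (∀ z ∈ W, z ≠ 0 → meyerForm A B z z < 0) ∧ Module.finrank ℝ W = n }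

/-- Meyer's signature cocycle `τ_g(A,B)`. -/
def meyerTau {g : ℕ} (A B : SpMat g) : ℤ :=
  (meyerPosIndex A B : ℤ) - (meyerNegIndex A B : ℤ)

/-- Commutator `a b a⁻¹ b⁻¹` of matrices (using the nonsingular matrix inverse). -/
def matComm {g : ℕ} (a b : SpMat g) : SpMat g := a * b * a⁻¹ * b⁻¹

lemma symJ_transpose (g : ℕ) : (symJ g)ᵀ = -(symJ g) := by
  simp [symJ, Matrix.fromBlocks_transpose, Matrix.fromBlocks_neg]

lemma symJ_det_isUnit (g : ℕ) : IsUnit (symJ g).det := by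
  have h : symJ g * symJ g = -1 := by
    simp only [symJ, Matrix.fromBlocks_multiply]
    ext (i|i) (j|j) <;> simp [Matrix.fromBlocks, Matrix.one_apply]
  have hd : (symJ g).det * (symJ g).det = 1 := by
    have := congrArg Matrix.det h
    rw [Matrix.det_mul] at this
    rw [this]
    simp [Matrix.det_neg, Fintype.card_sum]
  exact IsUnit.of_mul_eq_one _ hd

lemma symp_pres {g : ℕ} {M : SpMat g} (hM : IsSymplectic M) (u v : SpVec g) :
    (M *ᵥ u) ⬝ᵥ (symJ g *ᵥ (M *ᵥ v)) = u ⬝ᵥ (symJ g *ᵥ v) := by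
  rw [mulVec_mulVec, dotProduct_mulVec, ← vecMul_transpose, vecMul_vecMul,
    ← Matrix.mul_assoc, hM, ← dotProduct_mulVec]

lemma omega_skew {g : ℕ} (u v : SpVec g) :
    u ⬝ᵥ (symJ g *ᵥ v) = -(v ⬝ᵥ (symJ g *ᵥ u)) := by
  rw [dotProduct_mulVec, dotProduct_comm, dotProduct_mulVec, ← mulVec_transpose,
    symJ_transpose]
  simp [Matrix.neg_mulVec, dotProduct_neg, dotProduct_mulVec, dotProduct_comm]

lemma symp_det_isUnit {g : ℕ} {M : SpMat g} (hM : IsSymplectic M) : IsUnit M.det := by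
  have := congrArg Matrix.det hM
  rw [Matrix.det_mul, Matrix.det_mul, Matrix.det_transpose] at this
  have hJ := symJ_det_isUnit g
  have h2 : M.det * M.det = 1 := by
    rcases hJ.exists_right_inv with ⟨d, hd⟩
    have : M.det * (symJ g).det * M.det * d = (symJ g).det * d := by rw [this]
    rw [hd] at this
    nlinarith [this]
  exact IsUnit.of_mul_eq_one _ h2

lemma symp_inv {g : ℕ} {M : SpMat g} (hM : IsSymplectic M) : IsSymplectic M⁻¹ := by
  have hu := symp_det_isUnit hM
  have h1 : M * M⁻¹ = 1 := Matrix.mul_nonsing_inv M hu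
  unfold IsSymplectic at hM ⊢
  calc (M⁻¹)ᵀ * symJ g * M⁻¹ = (M⁻¹)ᵀ * (Mᵀ * symJ g * M) * M⁻¹ := by rw [hM]
    _ = ((M * M⁻¹)ᵀ) * symJ g * (M * M⁻¹) := by
        rw [Matrix.transpose_mul]; noncomm_ring
    _ = symJ g := by rw [h1]; simp

/-- For `g ≥ 1` and `A, B ∈ Sp(2g,ℝ)`, the restriction of the bilinear form
`⟨·,·⟩_{A,B}` to the subspace `V_{A,B}` is symmetric. -/
theorem meyerForm_symm_on_VAB (g : ℕ) (hg : 1 ≤ g) (A B : SpMat g)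
    (hA : IsSymplectic A) (hB : IsSymplectic B)
    (z₁ z₂ : SpVec g × SpVec g) (hz₁ : z₁ ∈ VAB A B) (hz₂ : z₂ ∈ VAB A B) :
    meyerForm A B z₁ z₂ = meyerForm A B z₂ z₁ := by
  obtain ⟨x₁, y₁⟩ := z₁
  obtain ⟨x₂, y₂⟩ := z₂
  simp only [VAB, Set.mem_setOf_eq] at hz₁ hz₂
  have hz₁' : A⁻¹ *ᵥ x₁ = x₁ + y₁ - B *ᵥ y₁ := by linear_combination hz₁
  have hz₂' : A⁻¹ *ᵥ x₂ = x₂ + y₂ - B *ᵥ y₂ := by linear_combination hz₂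
  have F1 : (x₁ + y₁ - B *ᵥ y₁) ⬝ᵥ (symJ g *ᵥ (x₂ + y₂ - B *ᵥ y₂))
      = x₁ ⬝ᵥ (symJ g *ᵥ x₂) := by
    rw [← hz₁', ← hz₂']; exact symp_pres (symp_inv hA) x₁ x₂
  have F2 := symp_pres hB y₁ y₂
  simp only [meyerForm]
  simp only [mulVec_add, mulVec_sub, dotProduct_add, dotProduct_sub, add_dotProduct,
    sub_dotProduct] at F1 ⊢
  linarith [omega_skew x₂ y₁, omega_skew x₂ (B *ᵥ y₁), omega_skew y₂ y₁,
    omega_skew y₂ (B *ᵥ y₁), F2]
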